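/- Let Ω ⊂ ℝ² be a measurable set and let z = (x,0) with 0 < x < 1. Then ∫_{Ω ∩ {|ξ| < 2x}} |( (z-ξ)/|z-ξ|² + ξ/|ξ|² )| dξ ≤ C·x for an absolute constant C. -/

import Mathlib

open MeasureTheory Metric Set ENNReal

local notation "E2" => EuclideanSpace ℝ (Fin 2)

-- norm of the scaled vector
lemma aux_norm (v : E2) : ‖(‖v‖ ^ 2)⁻¹ • v‖ = ‖v‖⁻¹ := by
  rcases eq_or_ne v 0 with rfl | hv
  · simp
  · rw [norm_smul, Real.norm_eq_abs, abs_of_nonneg (by positivity)]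
    have : ‖v‖ ≠ 0 := norm_ne_zero_iff.mpr hv
    field_simp

-- key: lintegral of ‖ξ‖⁻¹ over a ball of radius r
lemma key (r : ℝ) (hr : 0 < r) :
    ∫⁻ ξ in ball (0 : E2) r, ENNReal.ofReal ‖ξ‖⁻¹ ≤
      ENNReal.ofReal r * (4 * volume (ball (0 : E2) 1)) := by
  classical
  set K := volume (ball (0 : E2) 1) with hK
  set A : ℕ → Set E2 := fun k => ball (0 : E2) (r / 2 ^ k) \ ball 0 (r / 2 ^ (k + 1)) with hA
  have cover : ball (0 : E2) r ⊆ {(0 : E2)} ∪ ⋃ k, A k := by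
    intro ξ hξ
    rcases eq_or_ne ξ 0 with rfl | hne
    · exact Or.inl rfl
    have hξn : 0 < ‖ξ‖ := norm_pos_iff.mpr hne
    have hlt : ‖ξ‖ < r := mem_ball_zero_iff.mp hξ
    have hex : ∃ n, r / 2 ^ (n + 1) ≤ ‖ξ‖ := by
      obtain ⟨n, hn⟩ := pow_unbounded_of_one_lt (r / ‖ξ‖) (one_lt_two : (1:ℝ) < 2)
      refine ⟨n, ?_⟩
      rw [div_le_iff₀ (by positivity)]
      have : r < ‖ξ‖ * 2 ^ n := by
        rw [div_lt_iff₀ hξn] at hn; linarith [hn]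
      calc r ≤ ‖ξ‖ * 2 ^ n := this.le
        _ ≤ ‖ξ‖ * 2 ^ (n + 1) := by
            gcongr
            · exact one_le_two
            · omega
    refine Or.inr (mem_iUnion.mpr ⟨Nat.find hex, ?_, ?_⟩)
    · rw [mem_ball_zero_iff]
      rcases Nat.eq_zero_or_pos (Nat.find hex) with h0 | hpos
      · simpa [h0] using hlt
      · have := Nat.find_min hex (Nat.sub_lt hpos one_pos)
        push_neg at this
        have h1 : Nat.find hex - 1 + 1 = Nat.find hex := Nat.succ_pred_eq_of_pos hpos
        rwa [h1] at this
    · rw [mem_ball_zero_iff, not_lt]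
      exact Nat.find_spec hex
  calc ∫⁻ ξ in ball (0 : E2) r, ENNReal.ofReal ‖ξ‖⁻¹
      ≤ ∫⁻ ξ in {(0 : E2)} ∪ ⋃ k, A k, ENNReal.ofReal ‖ξ‖⁻¹ := lintegral_mono_set cover
    _ ≤ (∫⁻ ξ in {(0 : E2)}, ENNReal.ofReal ‖ξ‖⁻¹) +
          ∫⁻ ξ in ⋃ k, A k, ENNReal.ofReal ‖ξ‖⁻¹ := lintegral_union_le _ _ _
    _ = ∫⁻ ξ in ⋃ k, A k, ENNReal.ofReal ‖ξ‖⁻¹ := by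
        rw [setLIntegral_measure_zero _ _ (measure_singleton _), zero_add]
    _ ≤ ∑' k, ∫⁻ ξ in A k, ENNReal.ofReal ‖ξ‖⁻¹ := lintegral_iUnion_le _ _
    _ ≤ ∑' k : ℕ, ENNReal.ofReal (2 * r) * ENNReal.ofReal (1/2) ^ k * K := by
        refine ENNReal.tsum_le_tsum fun k => ?_
        have h1 : ∫⁻ ξ in A k, ENNReal.ofReal ‖ξ‖⁻¹ ≤
            ENNReal.ofReal ((r / 2 ^ (k+1))⁻¹) * volume (A k) := by
          rw [← setLIntegral_const]
          refine setLIntegral_mono measurable_const fun ξ hξ => ?_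
          have h2 : r / 2 ^ (k + 1) ≤ ‖ξ‖ := by
            have := hξ.2; rw [mem_ball_zero_iff, not_lt] at this; exact this
          exact ENNReal.ofReal_le_ofReal (inv_anti₀ (by positivity) h2)
        have h3 : volume (A k) ≤ ENNReal.ofReal ((r / 2 ^ k) ^ 2) * K := by
          calc volume (A k) ≤ volume (ball (0 : E2) (r / 2 ^ k)) :=
                measure_mono diff_subset
            _ = ENNReal.ofReal ((r / 2 ^ k) ^ 2) * K := by
                rw [Measure.addHaar_ball volume _ (by positivity)]
                norm_num [finrank_euclideanSpace_fin, hK]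
        calc ∫⁻ ξ in A k, ENNReal.ofReal ‖ξ‖⁻¹
            ≤ ENNReal.ofReal ((r / 2 ^ (k+1))⁻¹) * (ENNReal.ofReal ((r / 2 ^ k) ^ 2) * K) := by
              refine h1.trans ?_
              gcongr
          _ = ENNReal.ofReal ((r / 2 ^ (k+1))⁻¹ * (r / 2 ^ k) ^ 2) * K := by
              rw [ENNReal.ofReal_mul (by positivity), mul_assoc]
          _ = ENNReal.ofReal (2 * r) * ENNReal.ofReal (1/2) ^ k * K := by
              rw [← ENNReal.ofReal_pow (by norm_num), ← ENNReal.ofReal_mul (by positivity)]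
              congr 2
              field_simp
              have h2k : (2:ℝ) ^ k ≠ 0 := by positivity
              rw [one_div, inv_pow, eq_mul_inv_iff_mul_eq₀ h2k]
              ring
    _ = ENNReal.ofReal (2 * r) * K * ∑' k : ℕ, ENNReal.ofReal (1/2) ^ k := by
        rw [← ENNReal.tsum_mul_left]
        congr 1; ext k; ring
    _ = ENNReal.ofReal (2 * r) * K * 2 := by
        rw [ENNReal.tsum_geometric]
        congr 1
        rw [show ENNReal.ofReal (1/2) = 2⁻¹ by
          rw [one_div, ENNReal.ofReal_inv_of_pos (by norm_num)]; norm_num]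
        rw [ENNReal.one_sub_inv_two]
        simp
    _ = ENNReal.ofReal r * (4 * K) := by
        rw [show (2:ℝ) * r = 2 * r from rfl, ENNReal.ofReal_mul (by norm_num)]
        rw [show ENNReal.ofReal 2 = 2 by norm_num]
        ring

theorem stmt_6 :
    ∃ C : ℝ, ∀ (Ω : Set (EuclideanSpace ℝ (Fin 2))), MeasurableSet Ω →
      ∀ x : ℝ, 0 < x → x < 1 →
        ∀ z : EuclideanSpace ℝ (Fin 2), z = ![x, 0] →
          ∫ ξ in Ω ∩ {ξ | ‖ξ‖ < 2 * x},
              ‖(‖z - ξ‖ ^ 2)⁻¹ • (z - ξ) + (‖ξ‖ ^ 2)⁻¹ • ξ‖ ≤ C * x := by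
  set K := volume (ball (0 : E2) 1) with hKdef
  refine ⟨20 * K.toReal, fun Ω hΩ x hx hx1 z hz => ?_⟩
  have hKfin : K ≠ ⊤ := measure_ball_lt_top.ne
  set s : Set E2 := Ω ∩ {ξ | ‖ξ‖ < 2 * x} with hs
  set g : E2 → ℝ := fun ξ => ‖(‖z - ξ‖ ^ 2)⁻¹ • (z - ξ) + (‖ξ‖ ^ 2)⁻¹ • ξ‖ with hg
  have hnormz : ‖z‖ = x := by
    rw [EuclideanSpace.norm_eq, hz]
    simp [Fin.sum_univ_two, abs_of_pos hx, Real.sqrt_sq hx.le]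
  -- measurability of g
  have hmeas : Measurable g := by
    apply Measurable.norm
    exact ((measurable_const.sub measurable_id).norm.pow_const 2).inv.smul
        (measurable_const.sub measurable_id) |>.add
        ((measurable_norm.pow_const 2).inv.smul measurable_id)
  -- the integral equals toReal of the lintegral
  have heq : ∫ ξ in s, g ξ = (∫⁻ ξ in s, ENNReal.ofReal (g ξ)).toReal := by
    rw [integral_eq_lintegral_of_nonneg_ae]
    · exact Filter.Eventually.of_forall fun ξ => norm_nonneg _
    · exact hmeas.aestronglyMeasurable
  -- pointwise bound
  have hpt : ∀ ξ : E2, ENNReal.ofReal (g ξ) ≤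
      ENNReal.ofReal ‖z - ξ‖⁻¹ + ENNReal.ofReal ‖ξ‖⁻¹ := by
    intro ξ
    calc ENNReal.ofReal (g ξ) ≤ ENNReal.ofReal (‖z - ξ‖⁻¹ + ‖ξ‖⁻¹) := by
          apply ENNReal.ofReal_le_ofReal
          calc g ξ ≤ ‖(‖z - ξ‖ ^ 2)⁻¹ • (z - ξ)‖ + ‖(‖ξ‖ ^ 2)⁻¹ • ξ‖ := norm_add_le _ _
            _ = ‖z - ξ‖⁻¹ + ‖ξ‖⁻¹ := by rw [aux_norm, aux_norm]
      _ ≤ _ := ENNReal.ofReal_add_le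
  -- subsets
  have hsub1 : s ⊆ ball (0 : E2) (2 * x) := fun ξ hξ => mem_ball_zero_iff.mpr hξ.2
  have hsub2 : s ⊆ ball z (3 * x) := by
    intro ξ hξ
    rw [mem_ball, dist_eq_norm]
    calc ‖ξ - z‖ ≤ ‖ξ‖ + ‖z‖ := norm_sub_le _ _
      _ < 2 * x + x := by
          have := hξ.2
          rw [hnormz]
          exact add_lt_add_of_lt_of_le this le_rfl
      _ = 3 * x := by ring
  -- translation for the first term
  have htrans : ∫⁻ ξ in ball z (3 * x), ENNReal.ofReal ‖z - ξ‖⁻¹ =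
      ∫⁻ η in ball (0 : E2) (3 * x), ENNReal.ofReal ‖η‖⁻¹ := by
    have hmp : MeasurePreserving (fun ξ : E2 => z - ξ) volume volume :=
      Measure.measurePreserving_sub_left volume z
    have hpre : (fun ξ : E2 => z - ξ) ⁻¹' ball (0 : E2) (3 * x) = ball z (3 * x) := by
      ext ξ
      simp [mem_ball, dist_eq_norm, norm_sub_rev ξ z]
    have h := setLIntegral_map (μ := volume) (f := fun η : E2 => ENNReal.ofReal ‖η‖⁻¹)
      (g := fun ξ : E2 => z - ξ) (s := ball (0 : E2) (3 * x)) measurableSet_ball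
      (measurable_norm.inv.ennreal_ofReal) (by fun_prop)
    rw [hmp.map_eq, hpre] at h
    exact h.symm
  -- main lintegral bound
  have hmain : ∫⁻ ξ in s, ENNReal.ofReal (g ξ) ≤ ENNReal.ofReal (5 * x) * (4 * K) := by
    calc ∫⁻ ξ in s, ENNReal.ofReal (g ξ)
        ≤ ∫⁻ ξ in s, (ENNReal.ofReal ‖z - ξ‖⁻¹ + ENNReal.ofReal ‖ξ‖⁻¹) :=
          lintegral_mono fun ξ => hpt ξ
      _ = (∫⁻ ξ in s, ENNReal.ofReal ‖z - ξ‖⁻¹) + ∫⁻ ξ in s, ENNReal.ofReal ‖ξ‖⁻¹ :=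
          lintegral_add_left ((measurable_const.sub measurable_id).norm.inv.ennreal_ofReal) _
      _ ≤ (∫⁻ ξ in ball z (3 * x), ENNReal.ofReal ‖z - ξ‖⁻¹) +
            ∫⁻ ξ in ball (0 : E2) (2 * x), ENNReal.ofReal ‖ξ‖⁻¹ :=
          add_le_add (lintegral_mono_set hsub2) (lintegral_mono_set hsub1)
      _ = (∫⁻ η in ball (0 : E2) (3 * x), ENNReal.ofReal ‖η‖⁻¹) +
            ∫⁻ ξ in ball (0 : E2) (2 * x), ENNReal.ofReal ‖ξ‖⁻¹ := by rw [htrans]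
      _ ≤ ENNReal.ofReal (3 * x) * (4 * K) + ENNReal.ofReal (2 * x) * (4 * K) :=
          add_le_add (key (3 * x) (by positivity)) (key (2 * x) (by positivity))
      _ = ENNReal.ofReal (5 * x) * (4 * K) := by
          rw [← add_mul, ← ENNReal.ofReal_add (by positivity) (by positivity)]
          congr 2
          ring
  rw [heq]
  calc (∫⁻ ξ in s, ENNReal.ofReal (g ξ)).toReal
      ≤ (ENNReal.ofReal (5 * x) * (4 * K)).toReal := by
        apply ENNReal.toReal_mono _ hmain
        exact ENNReal.mul_ne_top ENNReal.ofReal_ne_top (by finiteness)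
    _ = (5 * x) * (4 * K.toReal) := by
        rw [ENNReal.toReal_mul, ENNReal.toReal_ofReal (by positivity), ENNReal.toReal_mul]
        norm_num
    _ = 20 * K.toReal * x := by ring
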